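/- Let S be a finite nonempty set of points in ℝ^m, p ∈ ℝ^m, and suppose p' ∈ conv(S) is a witness, i.e., d(p', v) < d(p, v) for all v ∈ S (so in particular p ≠ p'). Then the hyperplane orthogonally bisecting the segment pp' strictly separates p from conv(S): for every x ∈ conv(S) one has ⟨p' − p, x − (p + p')/2⟩ > 0, while ⟨p' − p, p − (p + p')/2⟩ < 0. -/

import Mathlib

open RealInnerProductSpace

/-- If `p' ∈ conv(S)` is a witness, the hyperplane orthogonally bisecting the
segment `p p'` strictly separates `p` from `conv(S)`: every `x ∈ conv(S)` satisfies
`⟨p' - p, x - (p + p')/2⟩ > 0`, while `⟨p' - p, p - (p + p')/2⟩ < 0`. -/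
theorem witness_bisector_separates {m : ℕ} (S : Finset (EuclideanSpace ℝ (Fin m)))
    (hS : S.Nonempty) (p p' : EuclideanSpace ℝ (Fin m))
    (hp' : p' ∈ convexHull ℝ (S : Set (EuclideanSpace ℝ (Fin m))))
    (hwit : ∀ v ∈ S, dist p' v < dist p v) :
    (∀ x ∈ convexHull ℝ (S : Set (EuclideanSpace ℝ (Fin m))),
        (0 : ℝ) < ⟪p' - p, x - (2 : ℝ)⁻¹ • (p + p')⟫) ∧
      ⟪p' - p, p - (2 : ℝ)⁻¹ • (p + p')⟫ < (0 : ℝ) := by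
  have key : ∀ v : EuclideanSpace ℝ (Fin m),
      ⟪p' - p, v - (2 : ℝ)⁻¹ • (p + p')⟫ = (‖v - p‖ ^ 2 - ‖v - p'‖ ^ 2) / 2 := by
    intro v
    simp only [inner_sub_left, inner_sub_right, inner_smul_right, inner_add_left,
      inner_add_right, @norm_sub_sq_real, real_inner_self_eq_norm_sq,
      real_inner_comm p v, real_inner_comm p' v, real_inner_comm p p']
    ring
  constructor
  · intro x hx
    have hconv : Convex ℝ {x : EuclideanSpace ℝ (Fin m) |
        (0 : ℝ) < ⟪p' - p, x - (2 : ℝ)⁻¹ • (p + p')⟫} := by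
      intro a ha b hb s t hs ht hst
      simp only [Set.mem_setOf_eq] at *
      have : ⟪p' - p, (s • a + t • b) - (2 : ℝ)⁻¹ • (p + p')⟫
          = s * ⟪p' - p, a - (2 : ℝ)⁻¹ • (p + p')⟫
            + t * ⟪p' - p, b - (2 : ℝ)⁻¹ • (p + p')⟫ := by
        simp only [inner_sub_right, inner_add_right, inner_smul_right]
        linear_combination ((2:ℝ)⁻¹ * ((inner ℝ (p' - p) p : ℝ) + (inner ℝ (p' - p) p' : ℝ))) * hst
      rw [this]
      rcases eq_or_lt_of_le hs with rfl | hs'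
      · simpa using mul_pos (by linarith : (0:ℝ) < t) hb
      · rcases eq_or_lt_of_le ht with rfl | ht'
        · simpa using mul_pos hs' ha
        · positivity
    have hsub : (S : Set (EuclideanSpace ℝ (Fin m))) ⊆ {x : EuclideanSpace ℝ (Fin m) |
        (0 : ℝ) < ⟪p' - p, x - (2 : ℝ)⁻¹ • (p + p')⟫} := by
      intro v hv
      have h := hwit v hv
      rw [dist_eq_norm] at h
      rw [dist_eq_norm] at h
      have h1 : ‖v - p'‖ < ‖v - p‖ := by
        rwa [norm_sub_rev v p', norm_sub_rev v p]
      simp only [Set.mem_setOf_eq, key v]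
      nlinarith [norm_nonneg (v - p'), norm_nonneg (v - p)]
    exact convexHull_min hsub hconv hx
  · obtain ⟨v, hv⟩ := hS
    have hne : p ≠ p' := by
      intro h; exact absurd (hwit v hv) (by rw [h]; exact lt_irrefl _)
    have h0 : (0 : ℝ) < ‖p' - p‖ ^ 2 := by
      have h := sub_ne_zero.mpr (Ne.symm hne)
      exact pow_pos (norm_pos_iff.mpr h) 2
    rw [key p]
    have : ‖p - p'‖ = ‖p' - p‖ := norm_sub_rev _ _
    simp only [sub_self, norm_zero]
    rw [this]
    nlinarith
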